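/- Let K_{m,n} = ⟨a, b : a^m = 1, b^{2n} = a^g, b a b⁻¹ = a⁻¹⟩ be non-abelian with m, n ≥ 1 (where g = 0 if m is odd, and g ∈ {0, m/2} if m is even). If k is an odd positive divisor of 2mn, then K_{m,n} has a normal subgroup of order k. -/

import Mathlib

/-- The relations of the metacyclic presentation
`K_{m,n} = ⟨a, b : a^m = 1, b^(2n) = a^g, b a b⁻¹ = a⁻¹⟩`, with generator `0`
playing the role of `a` and generator `1` playing the role of `b`. -/
def Krels (m n g : ℕ) : Set (FreeGroup (Fin 2)) :=
  {FreeGroup.of 0 ^ m,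
   FreeGroup.of 1 ^ (2 * n) * (FreeGroup.of 0 ^ g)⁻¹,
   FreeGroup.of 1 * FreeGroup.of 0 * (FreeGroup.of 1)⁻¹ * FreeGroup.of 0}

open Multiplicative

lemma stmt10aux_invAut_sq (G : Type*) [CommGroup G] :
    (MulEquiv.inv G : MulAut G) * MulEquiv.inv G = 1 := by
  ext x
  simp [MulAut.mul_apply]

/-- The "negation" action of `ZMod (2*n)` on `ZMod M` (written multiplicatively). -/
def stmt10aux_negAct (M n : ℕ) :
    Multiplicative (ZMod (2 * n)) →* MulAut (Multiplicative (ZMod M)) :=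
  AddMonoidHom.toMultiplicativeLeft
    (ZMod.lift (2 * n)
      ⟨zmultiplesHom (Additive (MulAut (Multiplicative (ZMod M))))
        (Additive.ofMul (MulEquiv.inv (Multiplicative (ZMod M)))), by
        rw [zmultiplesHom_apply, ← ofMul_zpow]
        have h : (MulEquiv.inv (Multiplicative (ZMod M))) ^ (((2 * n : ℕ)) : ℤ) = 1 := by
          rw [zpow_natCast, pow_mul, sq, stmt10aux_invAut_sq, one_pow]
        rw [h]
        rfl⟩)

lemma stmt10aux_negAct_intCast (M n : ℕ) (z : ℤ) :
    stmt10aux_negAct M n (Multiplicative.ofAdd ((z : ZMod (2 * n)))) =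
      (MulEquiv.inv (Multiplicative (ZMod M))) ^ z := by
  rw [stmt10aux_negAct, AddMonoidHom.coe_toMultiplicativeLeft]
  simp only [Function.comp_apply, toAdd_ofAdd, ZMod.lift_coe, zmultiplesHom_apply,
    ← ofMul_zpow, toMul_ofMul]

lemma stmt10aux_negAct_apply_one (M n : ℕ) (x : Multiplicative (ZMod M)) :
    stmt10aux_negAct M n (Multiplicative.ofAdd (1 : ZMod (2 * n))) x = x⁻¹ := by
  have h1 : (1 : ZMod (2 * n)) = ((1 : ℤ) : ZMod (2 * n)) := by norm_num
  rw [h1, stmt10aux_negAct_intCast, zpow_one, MulEquiv.inv_apply]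

lemma stmt10aux_mem_normalizer {G : Type*} [Group G] {S : Set G} {g : G}
    (h1 : ∀ s ∈ S, g * s * g⁻¹ ∈ Subgroup.closure S)
    (h2 : ∀ s ∈ S, g⁻¹ * s * g ∈ Subgroup.closure S) :
    g ∈ Subgroup.normalizer (Subgroup.closure S : Set G) := by
  have key : ∀ (w : G), (∀ s ∈ S, w * s * w⁻¹ ∈ Subgroup.closure S) →
      ∀ x ∈ Subgroup.closure S, w * x * w⁻¹ ∈ Subgroup.closure S := by
    intro w hw x hx
    induction hx using Subgroup.closure_induction with
    | mem y hy => exact hw y hy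
    | one => simpa using one_mem _
    | mul y z hy hz hy' hz' =>
        have e : w * (y * z) * w⁻¹ = (w * y * w⁻¹) * (w * z * w⁻¹) := by group
        rw [e]; exact mul_mem hy' hz'
    | inv y hy hy' =>
        have e : w * y⁻¹ * w⁻¹ = (w * y * w⁻¹)⁻¹ := by group
        rw [e]; exact inv_mem hy'
  rw [Subgroup.mem_normalizer_iff]
  intro h
  constructor
  · exact fun hh => key g h1 h hh
  · intro hh
    have h2' : ∀ s ∈ S, g⁻¹ * s * g⁻¹⁻¹ ∈ Subgroup.closure S := by
      intro s hs; rw [inv_inv]; exact h2 s hs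
    have := key g⁻¹ h2' _ hh
    have e : g⁻¹ * (g * h * g⁻¹) * g⁻¹⁻¹ = h := by group
    rwa [e] at this

set_option maxHeartbeats 2000000 in
theorem stmt10 (m n g k : ℕ) (hm : 1 ≤ m) (hn : 1 ≤ n)
    (hgodd : Odd m → g = 0) (hg : g = 0 ∨ 2 * g = m)
    (hna : ¬ ∀ x y : PresentedGroup (Krels m n g), x * y = y * x)
    (hkpos : 0 < k) (hk : k ∣ 2 * m * n) (hkodd : Odd k) :
    ∃ H : Subgroup (PresentedGroup (Krels m n g)), H.Normal ∧ Nat.card H = k := by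
  classical
  -- ### relations in the presented group
  have relhold : ∀ r ∈ Krels m n g, PresentedGroup.mk (Krels m n g) r = 1 := by
    intro r hr
    exact (QuotientGroup.eq_one_iff r).mpr (Subgroup.subset_normalClosure hr)
  set A : PresentedGroup (Krels m n g) := PresentedGroup.of 0 with hAdef
  set B : PresentedGroup (Krels m n g) := PresentedGroup.of 1 with hBdef
  have hr1 : A ^ m = 1 := by
    have h := relhold (FreeGroup.of 0 ^ m) (by simp [Krels])
    rw [map_pow] at h
    exact h
  have hr2 : B ^ (2 * n) = A ^ g := by
    have h := relhold (FreeGroup.of 1 ^ (2 * n) * (FreeGroup.of 0 ^ g)⁻¹) (by simp [Krels])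
    rw [map_mul, map_inv, map_pow, map_pow] at h
    exact mul_inv_eq_one.mp h
  have hr3 : B * A * B⁻¹ = A⁻¹ := by
    have h := relhold (FreeGroup.of 1 * FreeGroup.of 0 * (FreeGroup.of 1)⁻¹ * FreeGroup.of 0)
      (by simp [Krels])
    rw [map_mul, map_mul, map_mul, map_inv] at h
    exact mul_eq_one_iff_eq_inv.mp h
  -- ### arithmetic setup
  obtain ⟨kk, hkk'⟩ := hkodd
  have hk2 : ¬ 2 ∣ k := by omega
  have hcop2k : Nat.Coprime k 2 :=
    ((Nat.Prime.coprime_iff_not_dvd Nat.prime_two).mpr hk2).symm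
  have hkmn : k ∣ m * n := by
    have h : k ∣ 2 * (m * n) := by rwa [← mul_assoc]
    exact hcop2k.dvd_of_dvd_mul_left h
  set k₁ := Nat.gcd k m with hk₁def
  have hk₁pos : 0 < k₁ := Nat.gcd_pos_of_pos_left m hkpos
  have hk₁k : k₁ ∣ k := Nat.gcd_dvd_left k m
  have hk₁m : k₁ ∣ m := Nat.gcd_dvd_right k m
  set k₂ := k / k₁ with hk₂def
  have hkfac : k = k₁ * k₂ := (Nat.mul_div_cancel' hk₁k).symm
  have hk₂pos : 0 < k₂ := by
    rcases Nat.eq_zero_or_pos k₂ with h | h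
    · rw [h, mul_zero] at hkfac; omega
    · exact h
  have hk₂n : k₂ ∣ n := by
    have hcop : Nat.Coprime k₂ (m / k₁) := by
      have h := Nat.coprime_div_gcd_div_gcd (m := k) (n := m) hk₁pos
      exact h
    have h1 : k ∣ k₁ * ((m / k₁) * n) := by
      rw [← mul_assoc, Nat.mul_div_cancel' hk₁m]; exact hkmn
    rw [hkfac] at h1
    have h2 : k₂ ∣ (m / k₁) * n := (mul_dvd_mul_iff_left (show k₁ ≠ 0 by omega)).mp h1
    exact hcop.dvd_of_dvd_mul_left h2
  have hk₁odd : ¬ 2 ∣ k₁ := fun h => hk2 (h.trans hk₁k)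
  have hk₂odd : ¬ 2 ∣ k₂ := fun h => hk2 (h.trans ⟨k₁, by rw [hkfac, mul_comm]⟩)
  set a2 := m.factorization 2 with ha2def
  set m₀ := m / 2 ^ a2 with hm₀def
  have hm₀pos : 0 < m₀ := Nat.ordCompl_pos 2 (by omega)
  have hmfac : 2 ^ a2 * m₀ = m := Nat.ordProj_mul_ordCompl_eq_self m 2
  have hcopk₁2a : Nat.Coprime k₁ (2 ^ a2) :=
    Nat.Coprime.pow_right _ ((Nat.Prime.coprime_iff_not_dvd Nat.prime_two).mpr hk₁odd).symm
  have hk₁m₀ : k₁ ∣ m₀ := by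
    apply hcopk₁2a.dvd_of_dvd_mul_left
    rw [hmfac]; exact hk₁m
  have hm₀m : m₀ ∣ m := Nat.ordCompl_dvd m 2
  haveI : NeZero m₀ := ⟨by omega⟩
  haveI : NeZero (2 * n) := ⟨by omega⟩
  haveI : NeZero k₁ := ⟨by omega⟩
  haveI : NeZero k₂ := ⟨by omega⟩
  have hgm₀ : ((g : ℕ) : ZMod m₀) = 0 := by
    rcases hg with h | h
    · simp [h]
    · have h2m : 2 ∣ m := ⟨g, h.symm⟩
      have ha2pos : 1 ≤ a2 := by
        rw [ha2def]
        exact (Nat.Prime.factorization_pos_of_dvd Nat.prime_two (by omega) h2m)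
      have hdvd : m₀ ∣ g := by
        have h2 : 2 * g = 2 * (2 ^ (a2 - 1) * m₀) := by
          rw [h, ← hmfac, ← mul_assoc, ← pow_succ']
          congr 2
          omega
        have hgeq : g = 2 ^ (a2 - 1) * m₀ := by omega
        exact ⟨2 ^ (a2 - 1), by rw [hgeq, mul_comm]⟩
      rw [ZMod.natCast_eq_zero_iff]
      exact hdvd
  set s := m₀ / k₁ with hsdef
  have hsfac : k₁ * s = m₀ := Nat.mul_div_cancel' hk₁m₀
  have hspos : 0 < s := by
    rcases Nat.eq_zero_or_pos s with h | h
    · rw [h, mul_zero] at hsfac; omega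
    · exact h
  set M := m / k₁ with hMdef
  have hMfac : M = 2 ^ a2 * s := by
    have h : m = k₁ * (2 ^ a2 * s) := by rw [← hmfac, ← hsfac]; ring
    rw [hMdef, h, Nat.mul_div_cancel_left _ hk₁pos]
  have hMk₁ : M * k₁ = m := Nat.div_mul_cancel hk₁m
  set t := n / k₂ with htdef
  have htfac : k₂ * t = n := Nat.mul_div_cancel' hk₂n
  have htpos : 0 < t := by
    rcases Nat.eq_zero_or_pos t with h | h
    · rw [h, mul_zero] at htfac; omega
    · exact h
  have harith1 : ∀ v : ℕ, v < k₁ → m₀ ∣ M * v → v = 0 := by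
    intro v hv hdvd
    have e1 : M * v = (2 ^ a2 * v) * s := by rw [hMfac]; ring
    rw [e1, ← hsfac] at hdvd
    have h2 : k₁ ∣ 2 ^ a2 * v := (mul_dvd_mul_iff_right (show s ≠ 0 by omega)).mp hdvd
    have h3 : k₁ ∣ v := hcopk₁2a.dvd_of_dvd_mul_left h2
    exact Nat.eq_zero_of_dvd_of_lt h3 hv
  have harith2 : ∀ v : ℕ, v < k₂ → 2 * n ∣ (2 * (2 * t)) * v → v = 0 := by
    intro v hv hdvd
    have e1 : 2 * n = k₂ * (2 * t) := by rw [← htfac]; ring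
    have e2 : (2 * (2 * t)) * v = (2 * v) * (2 * t) := by ring
    rw [e1, e2] at hdvd
    have h2 : k₂ ∣ 2 * v := (mul_dvd_mul_iff_right (show 2 * t ≠ 0 by omega)).mp hdvd
    have hcop : Nat.Coprime k₂ 2 :=
      ((Nat.Prime.coprime_iff_not_dvd Nat.prime_two).mpr hk₂odd).symm
    have h3 : k₂ ∣ v := hcop.dvd_of_dvd_mul_left h2
    exact Nat.eq_zero_of_dvd_of_lt h3 hv
  -- ### derived group facts in K
  have hBA' : B * A⁻¹ * B⁻¹ = A := by
    rw [show B * A⁻¹ * B⁻¹ = (B * A * B⁻¹)⁻¹ by group, hr3, inv_inv]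
  have hc2 : B ^ 2 * A = A * B ^ 2 := by
    calc B ^ 2 * A = B * (B * A * B⁻¹) * B := by rw [pow_two]; group
    _ = B * A⁻¹ * B := by rw [hr3]
    _ = (B * A⁻¹ * B⁻¹) * B ^ 2 := by rw [pow_two]; group
    _ = A * B ^ 2 := by rw [hBA']
  have hconj' : B⁻¹ * A * B = A⁻¹ := by
    conv_lhs => rw [← hBA']
    group
  set u : PresentedGroup (Krels m n g) := A ^ M with hudef
  set c : PresentedGroup (Krels m n g) := B ^ (2 * (2 * t)) with hcdef
  have hu_pow : u ^ k₁ = 1 := by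
    rw [hudef, ← pow_mul, hMk₁, hr1]
  have hc_pow : c ^ k₂ = 1 := by
    rw [hcdef, ← pow_mul]
    have e : 2 * (2 * t) * k₂ = (2 * n) * 2 := by rw [← htfac]; ring
    rw [e, pow_mul, hr2]
    rcases hg with h | h
    · simp [h]
    · rw [← pow_mul]
      have e2 : g * 2 = m := by omega
      rw [e2, hr1]
  have hcommAc : Commute A c := by
    rw [hcdef, pow_mul]
    exact (show Commute A (B ^ 2) from hc2.symm).pow_right _
  have hcommBc : Commute B c := by
    rw [hcdef]; exact (Commute.refl B).pow_right _
  have hcommAu : Commute A u := by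
    rw [hudef]; exact (Commute.refl A).pow_right _
  have hcommuc : Commute u c := by
    rw [hudef]; exact hcommAc.pow_left _
  -- ### the concrete semidirect-product target
  set x₀ : Multiplicative (ZMod m₀) := Multiplicative.ofAdd 1 with hx₀def
  set y₀ : Multiplicative (ZMod (2 * n)) := Multiplicative.ofAdd 1 with hy₀def
  set f : Fin 2 → (SemidirectProduct (Multiplicative (ZMod m₀))
      (Multiplicative (ZMod (2 * n))) (stmt10aux_negAct m₀ n)) :=
    ![SemidirectProduct.inl x₀, SemidirectProduct.inr y₀] with hfdef
  have hf0 : f 0 = SemidirectProduct.inl x₀ := rfl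
  have hf1 : f 1 = SemidirectProduct.inr y₀ := rfl
  have hx₀m : x₀ ^ m = 1 := by
    rw [hx₀def, ← ofAdd_nsmul, nsmul_eq_mul, mul_one,
      (ZMod.natCast_eq_zero_iff m m₀).mpr hm₀m, ofAdd_zero]
  have hx₀g : x₀ ^ g = 1 := by
    rw [hx₀def, ← ofAdd_nsmul, nsmul_eq_mul, mul_one, hgm₀, ofAdd_zero]
  have hy₀2n : y₀ ^ (2 * n) = 1 := by
    rw [hy₀def, ← ofAdd_nsmul, nsmul_eq_mul, mul_one, ZMod.natCast_self, ofAdd_zero]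
  have hfrel : ∀ r ∈ Krels m n g, FreeGroup.lift f r = 1 := by
    intro r hr
    simp only [Krels, Set.mem_insert_iff, Set.mem_singleton_iff] at hr
    rcases hr with rfl | rfl | rfl
    · rw [map_pow, FreeGroup.lift_apply_of, hf0, ← map_pow SemidirectProduct.inl x₀ m, hx₀m, map_one]
    · rw [map_mul, map_inv, map_pow, map_pow, FreeGroup.lift_apply_of, FreeGroup.lift_apply_of, hf0, hf1,
        ← map_pow SemidirectProduct.inl x₀ g, ← map_pow SemidirectProduct.inr y₀ (2 * n),
        hx₀g, hy₀2n, map_one, map_one, inv_one, mul_one]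
    · rw [map_mul, map_mul, map_mul, map_inv, FreeGroup.lift_apply_of, FreeGroup.lift_apply_of, hf0, hf1,
        ← map_inv, ← SemidirectProduct.inl_aut]
      rw [hy₀def, stmt10aux_negAct_apply_one, ← map_mul, inv_mul_cancel, map_one]
  set ψ := PresentedGroup.toGroup hfrel with hψdef
  have hψ0 : ψ A = SemidirectProduct.inl x₀ := PresentedGroup.toGroup.of hfrel
  have hψ1 : ψ B = SemidirectProduct.inr y₀ := PresentedGroup.toGroup.of hfrel
  have hψu : ψ u = SemidirectProduct.inl (x₀ ^ M) := by
    rw [hudef, map_pow, hψ0, ← map_pow SemidirectProduct.inl x₀ M]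
  have hψc : ψ c = SemidirectProduct.inr (y₀ ^ (2 * (2 * t))) := by
    rw [hcdef, map_pow, hψ1, ← map_pow SemidirectProduct.inr y₀ (2 * (2 * t))]
  -- ### homomorphisms from cyclic groups into K
  have hupow_int : u ^ ((k₁ : ℕ) : ℤ) = 1 := by rw [zpow_natCast, hu_pow]
  have hcpow_int : c ^ ((k₂ : ℕ) : ℤ) = 1 := by rw [zpow_natCast, hc_pow]
  set φu : Multiplicative (ZMod k₁) →* PresentedGroup (Krels m n g) :=
    AddMonoidHom.toMultiplicativeLeft
      (ZMod.lift k₁ ⟨zmultiplesHom (Additive (PresentedGroup (Krels m n g)))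
        (Additive.ofMul u), by
          rw [zmultiplesHom_apply, ← ofMul_zpow, hupow_int]; rfl⟩) with hφudef
  set φc : Multiplicative (ZMod k₂) →* PresentedGroup (Krels m n g) :=
    AddMonoidHom.toMultiplicativeLeft
      (ZMod.lift k₂ ⟨zmultiplesHom (Additive (PresentedGroup (Krels m n g)))
        (Additive.ofMul c), by
          rw [zmultiplesHom_apply, ← ofMul_zpow, hcpow_int]; rfl⟩) with hφcdef
  have hφu_int : ∀ z : ℤ, φu (Multiplicative.ofAdd ((z : ZMod k₁))) = u ^ z := by
    intro z
    rw [hφudef, AddMonoidHom.coe_toMultiplicativeLeft]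
    simp only [Function.comp_apply, toAdd_ofAdd, ZMod.lift_coe, zmultiplesHom_apply,
      ← ofMul_zpow, toMul_ofMul]
  have hφc_int : ∀ z : ℤ, φc (Multiplicative.ofAdd ((z : ZMod k₂))) = c ^ z := by
    intro z
    rw [hφcdef, AddMonoidHom.coe_toMultiplicativeLeft]
    simp only [Function.comp_apply, toAdd_ofAdd, ZMod.lift_coe, zmultiplesHom_apply,
      ← ofMul_zpow, toMul_ofMul]
  have hφu_val : ∀ a : Multiplicative (ZMod k₁), φu a = u ^ (a.toAdd.val) := by
    intro a
    have h0 : (((a.toAdd.val : ℕ) : ℤ) : ZMod k₁) = a.toAdd := by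
      push_cast
      exact ZMod.natCast_rightInverse a.toAdd
    calc φu a = φu (Multiplicative.ofAdd ((((a.toAdd.val : ℕ) : ℤ) : ZMod k₁))) := by
          rw [h0]; rfl
    _ = u ^ (((a.toAdd.val : ℕ)) : ℤ) := hφu_int _
    _ = u ^ (a.toAdd.val) := zpow_natCast _ _
  have hφc_val : ∀ b : Multiplicative (ZMod k₂), φc b = c ^ (b.toAdd.val) := by
    intro b
    have h0 : (((b.toAdd.val : ℕ) : ℤ) : ZMod k₂) = b.toAdd := by
      push_cast
      exact ZMod.natCast_rightInverse b.toAdd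
    calc φc b = φc (Multiplicative.ofAdd ((((b.toAdd.val : ℕ) : ℤ) : ZMod k₂))) := by
          rw [h0]; rfl
    _ = c ^ (((b.toAdd.val : ℕ)) : ℤ) := hφc_int _
    _ = c ^ (b.toAdd.val) := zpow_natCast _ _
  have hcommφ : ∀ (a : Multiplicative (ZMod k₁)) (b : Multiplicative (ZMod k₂)),
      Commute (φu a) (φc b) := by
    intro a b
    rw [hφu_val, hφc_val]
    exact hcommuc.pow_pow _ _
  set θ := MonoidHom.noncommCoprod φu φc hcommφ with hθdef
  have hθ_apply : ∀ p : Multiplicative (ZMod k₁) × Multiplicative (ZMod k₂),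
      θ p = φu p.1 * φc p.2 := fun p => rfl
  -- ### injectivity of θ
  have hcomp : ∀ (X : Multiplicative (ZMod m₀)) (Y : Multiplicative (ZMod (2 * n))),
      SemidirectProduct.inl X * SemidirectProduct.inr Y =
        (1 : SemidirectProduct (Multiplicative (ZMod m₀))
          (Multiplicative (ZMod (2 * n))) (stmt10aux_negAct m₀ n)) → X = 1 ∧ Y = 1 := by
    intro X Y h
    rw [← SemidirectProduct.mk_eq_inl_mul_inr] at h
    constructor
    · have h2 := congrArg SemidirectProduct.left h
      simpa using h2
    · have h2 := congrArg SemidirectProduct.right h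
      simpa using h2
  have hθinj : Function.Injective θ := by
    rw [injective_iff_map_eq_one]
    rintro ⟨a, b⟩ hp
    have hp' : u ^ (a.toAdd.val) * c ^ (b.toAdd.val) = 1 := by
      rw [← hφu_val, ← hφc_val]; exact hp
    have hψp := congrArg ψ hp'
    simp only [map_mul, map_pow, map_one, hudef, hcdef, hψ0, hψ1, ← pow_mul] at hψp
    rw [← map_pow SemidirectProduct.inl x₀ (M * a.toAdd.val),
      ← map_pow SemidirectProduct.inr y₀ (2 * (2 * t) * b.toAdd.val)] at hψp
    obtain ⟨hX, hY⟩ := hcomp _ _ hψp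
    rw [hx₀def, ← ofAdd_nsmul, nsmul_eq_mul, mul_one] at hX
    rw [hy₀def, ← ofAdd_nsmul, nsmul_eq_mul, mul_one] at hY
    have hXd : m₀ ∣ M * a.toAdd.val := by
      rw [← ZMod.natCast_eq_zero_iff]
      exact ofAdd_eq_one.mp hX
    have hYd : 2 * n ∣ (2 * (2 * t)) * b.toAdd.val := by
      rw [← ZMod.natCast_eq_zero_iff]
      exact ofAdd_eq_one.mp hY
    have hva : a.toAdd.val = 0 := harith1 _ (ZMod.val_lt _) hXd
    have hvb : b.toAdd.val = 0 := harith2 _ (ZMod.val_lt _) hYd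
    have ha : a = 1 := by
      have h0 : a.toAdd = 0 := (ZMod.val_eq_zero _).mp hva
      rw [show a = Multiplicative.ofAdd a.toAdd from rfl, h0, ofAdd_zero]
    have hb : b = 1 := by
      have h0 : b.toAdd = 0 := (ZMod.val_eq_zero _).mp hvb
      rw [show b = Multiplicative.ofAdd b.toAdd from rfl, h0, ofAdd_zero]
    rw [ha, hb]
    rfl
  -- ### the range of θ equals the closure of {u, c}
  have hone_k₁ : ((1 : ℤ) : ZMod k₁) = (1 : ZMod k₁) := by norm_num
  have hone_k₂ : ((1 : ℤ) : ZMod k₂) = (1 : ZMod k₂) := by norm_num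
  have hmem_u : u ∈ θ.range := by
    refine ⟨(Multiplicative.ofAdd (1 : ZMod k₁), 1), ?_⟩
    rw [hθ_apply]
    simp only [map_one, mul_one]
    rw [← hone_k₁, hφu_int, zpow_one]
  have hmem_c : c ∈ θ.range := by
    refine ⟨(1, Multiplicative.ofAdd (1 : ZMod k₂)), ?_⟩
    rw [hθ_apply]
    simp only [map_one, one_mul]
    rw [← hone_k₂, hφc_int, zpow_one]
  have hrange_eq : θ.range = Subgroup.closure {u, c} := by
    apply le_antisymm
    · rintro w ⟨⟨a, b⟩, rfl⟩
      have e : θ (a, b) = u ^ (a.toAdd.val) * c ^ (b.toAdd.val) := by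
        rw [hθ_apply, hφu_val, hφc_val]
      rw [e]
      have hu_mem : u ∈ Subgroup.closure ({u, c} :
          Set (PresentedGroup (Krels m n g))) := Subgroup.subset_closure (Set.mem_insert _ _)
      have hc_mem : c ∈ Subgroup.closure ({u, c} :
          Set (PresentedGroup (Krels m n g))) :=
        Subgroup.subset_closure (Set.mem_insert_of_mem _ rfl)
      exact mul_mem (pow_mem hu_mem _) (pow_mem hc_mem _)
    · refine (Subgroup.closure_le _).mpr ?_
      rintro w hw
      rcases hw with rfl | rfl
      exacts [hmem_u, hmem_c]
  clear_value θ ψ φu φc f x₀ y₀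
  -- ### normality
  have hnormal : (Subgroup.closure ({u, c} :
      Set (PresentedGroup (Krels m n g)))).Normal := by
    rw [← Subgroup.normalizer_eq_top_iff, eq_top_iff, ← PresentedGroup.closure_range_of (Krels m n g),
      Subgroup.closure_le]
    rintro w ⟨i, rfl⟩
    have hi : PresentedGroup.of (rels := Krels m n g) i = A ∨
        PresentedGroup.of (rels := Krels m n g) i = B := by
      fin_cases i
      · exact Or.inl rfl
      · exact Or.inr rfl
    rcases hi with hi | hi
    · -- conjugation by A
      rw [hi]
      apply stmt10aux_mem_normalizer
      · rintro sEl (rfl | rfl)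
        · rw [hcommAu.eq, mul_inv_cancel_right]
          exact Subgroup.subset_closure (Set.mem_insert _ _)
        · rw [hcommAc.eq, mul_inv_cancel_right]
          exact Subgroup.subset_closure (Set.mem_insert_of_mem _ rfl)
      · rintro sEl (rfl | rfl)
        · rw [hcommAu.inv_left.eq, inv_mul_cancel_right]
          exact Subgroup.subset_closure (Set.mem_insert _ _)
        · rw [hcommAc.inv_left.eq, inv_mul_cancel_right]
          exact Subgroup.subset_closure (Set.mem_insert_of_mem _ rfl)
    · -- conjugation by B
      rw [hi]
      apply stmt10aux_mem_normalizer
      · rintro sEl (rfl | rfl)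
        · rw [hudef, ← conj_pow, hr3, inv_pow]
          exact inv_mem (Subgroup.subset_closure (Set.mem_insert _ _))
        · rw [hcommBc.eq, mul_inv_cancel_right]
          exact Subgroup.subset_closure (Set.mem_insert_of_mem _ rfl)
      · rintro sEl (rfl | rfl)
        · rw [hudef, show B⁻¹ * A ^ M * B = B⁻¹ * A ^ M * B⁻¹⁻¹ by rw [inv_inv],
            ← conj_pow, show B⁻¹ * A * B⁻¹⁻¹ = B⁻¹ * A * B by rw [inv_inv], hconj', inv_pow]
          exact inv_mem (Subgroup.subset_closure (Set.mem_insert _ _))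
        · rw [hcommBc.inv_left.eq, inv_mul_cancel_right]
          exact Subgroup.subset_closure (Set.mem_insert_of_mem _ rfl)
  -- ### conclusion
  refine ⟨θ.range, ?_, ?_⟩
  · rw [hrange_eq]; exact hnormal
  · calc Nat.card θ.range
        = Nat.card (Multiplicative (ZMod k₁) × Multiplicative (ZMod k₂)) :=
          (Nat.card_congr (MonoidHom.ofInjective hθinj).toEquiv).symm
    _ = k₁ * k₂ := by
        rw [Nat.card_prod, Nat.card_congr (Multiplicative.toAdd (α := ZMod k₁)),
          Nat.card_congr (Multiplicative.toAdd (α := ZMod k₂)), Nat.card_zmod, Nat.card_zmod]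
    _ = k := hkfac.symm
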